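/- Let C be a category with coproducts indexed by A*, let A be an alphabet and L : O_A → C a C-language. Define the C-automaton 𝒜_init by: 𝒜_init(center) = the coproduct of copies of L(left) indexed by words u ∈ A*; 𝒜_init(▷) : L(left) → 𝒜_init(center) is the coprojection at the empty word ε; 𝒜_init(a) : 𝒜_init(center) → 𝒜_init(center) is the morphism whose u-indexed component is the coprojection at ua; and 𝒜_init(◁) : 𝒜_init(center) → L(right) is the morphism whose u-indexed component is L(▷u◁). Then 𝒜_init accepts L and is an initial object of Auto(L). -/

import Mathlib

open CategoryTheory CategoryTheory.Limits

universe v u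

/-! ### The input category `I_A` of word automata -/

inductive WObj (A : Type) : Type where
  | left | center | right

inductive WEdge {A : Type} : WObj A → WObj A → Type where
  | tri : WEdge WObj.left WObj.center
  | letter (a : A) : WEdge WObj.center WObj.center
  | tril : WEdge WObj.center WObj.right

instance (A : Type) : Quiver (WObj A) := ⟨WEdge⟩

/-- `I_A`: the free category on the graph `left -▷→ center -a→ center -◁→ right`. -/
def IA (A : Type) : Type := Paths (WObj A)

instance (A : Type) : Category (IA A) :=
  inferInstanceAs (Category (Paths (WObj A)))

def IA.l (A : Type) : IA A := WObj.left
def IA.c (A : Type) : IA A := WObj.center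
def IA.r (A : Type) : IA A := WObj.right

/-- The generating morphism `▷ : left ⟶ center`. -/
def IA.tri (A : Type) : IA.l A ⟶ IA.c A := Quiver.Hom.toPath WEdge.tri
/-- The generating morphism `a : center ⟶ center` for a letter `a`. -/
def IA.letter {A : Type} (a : A) : IA.c A ⟶ IA.c A := Quiver.Hom.toPath (WEdge.letter a)
/-- The generating morphism `◁ : center ⟶ right`. -/
def IA.tril (A : Type) : IA.c A ⟶ IA.r A := Quiver.Hom.toPath WEdge.tril

/-- The word spelled by a path in the graph (the sequence of `letter` edges used). -/
def toWord {A : Type} : ∀ {X Y : WObj A}, Quiver.Path X Y → List A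
  | _, _, Quiver.Path.nil => []
  | _, _, Quiver.Path.cons p e =>
      toWord p ++ (match e with
        | WEdge.letter a => [a]
        | _ => [])

/-- The path `center → center` spelling a word `w`. -/
def pathCC {A : Type} : List A → ((IA.c A) ⟶ (IA.c A))
  | [] => Quiver.Path.nil
  | a :: w => (Quiver.Hom.toPath (WEdge.letter a)).comp (pathCC w)

/-- The path `▷ w ◁ : left ⟶ right` spelling a word `w`. -/
def pathLR {A : Type} (w : List A) : (IA.l A) ⟶ (IA.r A) :=
  IA.tri A ≫ pathCC w ≫ IA.tril A

theorem path_from_right {A : Type} : ∀ {Z : WObj A},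
    Quiver.Path (WObj.right : WObj A) Z → Z = WObj.right
  | _, Quiver.Path.nil => rfl
  | _, Quiver.Path.cons p e => by
      have h := path_from_right p
      subst h
      exact nomatch e

theorem path_ll_nil {A : Type} (p : Quiver.Path (WObj.left : WObj A) WObj.left) :
    p = Quiver.Path.nil := by
  cases p with
  | nil => rfl
  | cons q e => exact nomatch e

theorem path_rr_nil {A : Type} (p : Quiver.Path (WObj.right : WObj A) WObj.right) :
    p = Quiver.Path.nil := by
  cases p with
  | nil => rfl
  | cons q e =>
      have h := path_from_right q
      subst h
      exact nomatch e

theorem path_rl_false {A : Type} (p : Quiver.Path (WObj.right : WObj A) WObj.left) :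
    False := by
  have := path_from_right p
  exact nomatch this

/-- `O_A`: the full subcategory of `I_A` on the objects `left` and `right`. -/
def OA (A : Type) : Type := ObjectProperty.FullSubcategory (fun X : IA A => X ≠ IA.c A)

instance (A : Type) : Category (OA A) :=
  inferInstanceAs (Category (ObjectProperty.FullSubcategory (fun X : IA A => X ≠ IA.c A)))

/-- The inclusion functor `ι : O_A ⥤ I_A`. -/
def OA.inc (A : Type) : OA A ⥤ IA A := ObjectProperty.ι _

def OA.l (A : Type) : OA A := ⟨IA.l A, fun h => by cases h⟩
def OA.r (A : Type) : OA A := ⟨IA.r A, fun h => by cases h⟩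

/-- The morphism `▷ w ◁ : left ⟶ right` of `O_A`. -/
def OA.word {A : Type} (w : List A) : OA.l A ⟶ OA.r A := InducedCategory.homMk (pathLR w)

/-- The language `O_A ⥤ C` determined by two objects `LI`, `LO` of `C` and a function
assigning to every word `w ∈ A*` a morphism `LI ⟶ LO` (the value at `▷w◁`). -/
def mkLang {A : Type} {C : Type u} [Category.{v} C] (LI LO : C)
    (f : List A → (LI ⟶ LO)) : OA A ⥤ C where
  obj X :=
    match X with
    | ⟨WObj.left, _⟩ => LI
    | ⟨WObj.right, _⟩ => LO
    | ⟨WObj.center, h⟩ => absurd rfl h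
  map {X Y} p :=
    match X, Y, p with
    | ⟨WObj.left, _⟩, ⟨WObj.left, _⟩, _ => 𝟙 LI
    | ⟨WObj.left, _⟩, ⟨WObj.right, _⟩, p => f (toWord p.hom)
    | ⟨WObj.right, _⟩, ⟨WObj.right, _⟩, _ => 𝟙 LO
    | ⟨WObj.right, _⟩, ⟨WObj.left, _⟩, p => (path_rl_false p.hom).elim
    | ⟨WObj.center, h⟩, _, _ => absurd rfl h
    | _, ⟨WObj.center, h⟩, _ => absurd rfl h
  map_id X := by
    rcases X with ⟨(_|_|_), hX⟩
    · rfl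
    · exact absurd rfl hX
    · rfl
  map_comp {X Y Z} p q := by
    rcases X with ⟨(_|_|_), hX⟩ <;> rcases Y with ⟨(_|_|_), hY⟩ <;>
      rcases Z with ⟨(_|_|_), hZ⟩ <;>
      first
        | exact absurd rfl hX
        | exact absurd rfl hY
        | exact absurd rfl hZ
        | exact (path_rl_false p.hom).elim
        | exact (path_rl_false q.hom).elim
        | exact (Category.id_comp _).symm
        | (have hp := path_ll_nil p.hom
           show f (toWord (Quiver.Path.comp p.hom q.hom)) = 𝟙 LI ≫ f (toWord q.hom)
           rw [hp, Category.id_comp]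
           exact congrArg (fun x => f (toWord x)) (Quiver.Path.nil_comp _))
        | (have hq := path_rr_nil q.hom
           show f (toWord (Quiver.Path.comp p.hom q.hom)) = f (toWord p.hom) ≫ 𝟙 LO
           rw [hq, Category.comp_id]
           exact congrArg (fun x => f (toWord x)) (Quiver.Path.comp_nil _))

/-- A `C`-automaton `M` accepts the `C`-language `L` when `ι ⋙ M = L`. -/
def Accepts {A : Type} {C : Type u} [Category.{v} C] (M : IA A ⥤ C) (L : OA A ⥤ C) : Prop :=
  OA.inc A ⋙ M = L

/-- The category `Auto(L)` of `C`-automata accepting the language `L`; morphisms are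
natural transformations whose whiskering along `ι` is the identity of `L`. -/
def Auto (A : Type) {C : Type u} [Category.{v} C] (L : OA A ⥤ C) : Type _ :=
  { M : IA A ⥤ C // Accepts M L }

instance (A : Type) {C : Type u} [Category.{v} C] (L : OA A ⥤ C) :
    Category (Auto A L) where
  Hom M N := { α : M.1 ⟶ N.1 //
    CategoryTheory.Functor.whiskerLeft (OA.inc A) α = eqToHom (M.2.trans N.2.symm) }
  id M := ⟨𝟙 M.1, by simp⟩
  comp {M N P} f g := ⟨f.1 ≫ g.1, by
    rw [CategoryTheory.Functor.whiskerLeft_comp, f.2, g.2, eqToHom_trans]⟩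
  id_comp f := Subtype.ext (Category.id_comp _)
  comp_id f := Subtype.ext (Category.comp_id _)
  assoc f g h := Subtype.ext (Category.assoc _ _ _)

/-- The functor `St : Auto(L) ⥤ C` evaluating an automaton at the object `center`. -/
def St (A : Type) {C : Type u} [Category.{v} C] (L : OA A ⥤ C) : Auto A L ⥤ C where
  obj M := M.1.obj (IA.c A)
  map f := f.1.app (IA.c A)
  map_id _ := rfl
  map_comp _ _ := rfl

/-- Constructor for objects of `Auto(L)`. -/
def Auto.mk {A : Type} {C : Type u} [Category.{v} C] {L : OA A ⥤ C}
    (M : IA A ⥤ C) (h : Accepts M L) : Auto A L := ⟨M, h⟩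

/-- The underlying natural transformation of a morphism in `Auto(L)`. -/
def Auto.nat {A : Type} {C : Type u} [Category.{v} C] {L : OA A ⥤ C} {M N : Auto A L}
    (α : M ⟶ N) : M.1 ⟶ N.1 :=
  (show { β : M.1 ⟶ N.1 //
      CategoryTheory.Functor.whiskerLeft (OA.inc A) β = eqToHom (M.2.trans N.2.symm) } from α).1

variable {A : Type} {C : Type u} [Category.{v} C]

/-- The initial automaton for a language `L : O_A ⥤ C`, defined on the generating graph:
its state object is the `A*`-indexed copower of `L(left)`, `▷` is the coprojection at the
empty word, a letter `a` acts by sending the `u`-component to the coprojection at `u·a`,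
and `◁` has `u`-component `L(▷u◁)`. -/
noncomputable def AinitPre [HasColimitsOfShape (Discrete (List A)) C] (L : OA A ⥤ C) :
    WObj A ⥤q C where
  obj X :=
    match X with
    | WObj.left => L.obj (OA.l A)
    | WObj.center => ∐ (fun _ : List A => L.obj (OA.l A))
    | WObj.right => L.obj (OA.r A)
  map e :=
    match e with
    | WEdge.tri => Sigma.ι (fun _ : List A => L.obj (OA.l A)) ([] : List A)
    | WEdge.letter a =>
        Sigma.desc (fun u : List A => Sigma.ι (fun _ : List A => L.obj (OA.l A)) (u ++ [a]))
    | WEdge.tril => Sigma.desc (fun u : List A => L.map (OA.word u))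

/-- The automaton `𝒜_init`, i.e. the above data regarded as a functor `I_A ⥤ C`. -/
noncomputable def Ainit [HasColimitsOfShape (Discrete (List A)) C] (L : OA A ⥤ C) :
    IA A ⥤ C :=
  Paths.lift (AinitPre L)


section Aux

theorem paths_comp {A : Type} {X Y Z : IA A} (p : X ⟶ Y) (q : Y ⟶ Z) :
    p ≫ q = Quiver.Path.comp p q := rfl

theorem path_to_left {A : Type} : ∀ {X : WObj A},
    Quiver.Path X (WObj.left : WObj A) → X = WObj.left
  | _, Quiver.Path.nil => rfl
  | _, Quiver.Path.cons _ e => nomatch e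

theorem pathCC_comp {A : Type} (u v : List A) :
    pathCC (u ++ v) = (pathCC u).comp (pathCC v) := by
  induction u with
  | nil => exact (Quiver.Path.nil_comp _).symm
  | cons a u ih =>
    simp only [pathCC, List.cons_append, ih]
    exact (Quiver.Path.comp_assoc _ _ _).symm

theorem pathCC_single {A : Type} (a : A) :
    pathCC [a] = Quiver.Hom.toPath (WEdge.letter a) := by
  exact Quiver.Path.comp_nil _

theorem cc_decomp {A : Type} : ∀ (p : Quiver.Path (WObj.center : WObj A) WObj.center),
    p = pathCC (toWord p)
  | Quiver.Path.nil => by with_unfolding_all rfl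
  | Quiver.Path.cons q WEdge.tri => absurd (path_to_left q) (by simp)
  | Quiver.Path.cons q (WEdge.letter a) => by
      have ih := cc_decomp q
      simp only [toWord, pathCC_comp, pathCC_single, ← ih]
      rfl

theorem lc_decomp {A : Type} : ∀ (p : Quiver.Path (WObj.left : WObj A) WObj.center),
    p = Quiver.Path.comp (IA.tri A) (pathCC (toWord p))
  | Quiver.Path.cons q WEdge.tri => by
      rw [path_ll_nil q]
      with_unfolding_all rfl
  | Quiver.Path.cons q (WEdge.letter a) => by
      have ih := lc_decomp q
      simp only [toWord, pathCC_comp, pathCC_single]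
      conv_lhs => rw [ih]
      rfl

theorem lr_decomp {A : Type} : ∀ (p : Quiver.Path (WObj.left : WObj A) WObj.right),
    p = pathLR (toWord p)
  | Quiver.Path.cons q WEdge.tril => by
      have ih := lc_decomp q
      simp only [toWord, List.append_nil, pathLR, paths_comp]
      conv_lhs => rw [ih]
      rfl

end Aux



section Aux2

variable {A : Type} {C : Type u} [Category.{v} C]
variable [HasColimitsOfShape (Discrete (List A)) C] (L : OA A ⥤ C)

theorem Ainit_map_tri :
    (Ainit L).map (IA.tri A) = Sigma.ι (fun _ : List A => L.obj (OA.l A)) ([] : List A) := by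
  exact Category.id_comp _

theorem Ainit_map_letter (a : A) :
    (Ainit L).map (IA.letter a) =
      Sigma.desc (fun u : List A => Sigma.ι (fun _ : List A => L.obj (OA.l A)) (u ++ [a])) := by
  exact Category.id_comp _

theorem Ainit_map_tril :
    (Ainit L).map (IA.tril A) = Sigma.desc (fun u : List A => L.map (OA.word u)) := by
  exact Category.id_comp _

theorem iota_pathCC (w u : List A) :
    Sigma.ι (fun _ : List A => L.obj (OA.l A)) u ≫ (Ainit L).map (pathCC w) =
      Sigma.ι (fun _ : List A => L.obj (OA.l A)) (u ++ w) := by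
  induction w generalizing u with
  | nil =>
      rw [show pathCC ([] : List A) = 𝟙 (IA.c A) from rfl, CategoryTheory.Functor.map_id]
      simp only [List.append_nil]
      exact Category.comp_id _
  | cons a w ih =>
      rw [show pathCC (a :: w) = IA.letter a ≫ pathCC w from rfl, Functor.map_comp,
        Ainit_map_letter]
      erw [← Category.assoc, colimit.ι_desc]
      have := ih (u ++ [a])
      simp only [List.append_assoc, List.cons_append, List.nil_append] at this
      with_unfolding_all exact this

theorem Ainit_map_pathLR (w : List A) :
    (Ainit L).map (pathLR w) = L.map (OA.word w) := by
  rw [pathLR, Functor.map_comp, Functor.map_comp, Ainit_map_tri, Ainit_map_tril]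
  erw [← Category.assoc, iota_pathCC]
  exact colimit.ι_desc (Cofan.mk _ fun u : List A => L.map (OA.word u)) ⟨([] : List A) ++ w⟩

theorem ainit_accepts : Accepts (Ainit L) L := by
  apply CategoryTheory.Functor.ext
  case h_obj =>
    intro X
    rcases X with ⟨(_|_|_), h⟩
    · rfl
    · exact absurd rfl h
    · rfl
  case h_map =>
    intro X Y f
    rcases f with ⟨f⟩
    rcases X with ⟨(_|_|_), hX⟩ <;> rcases Y with ⟨(_|_|_), hY⟩ <;>
      first
        | exact absurd rfl hX
        | exact absurd rfl hY
        | skip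
    · -- left ⟶ left
      rw [path_ll_nil f]
      show (Ainit L).map (𝟙 (IA.l A)) = _ ≫ L.map (𝟙 (OA.l A)) ≫ _
      simp only [CategoryTheory.Functor.map_id, eqToHom_refl]
      exact ((Category.id_comp _).trans (Category.comp_id _)).symm
    · -- left ⟶ right
      conv_lhs => rw [lr_decomp f]
      conv_rhs => rw [lr_decomp f]
      show (Ainit L).map (pathLR (toWord f)) = _ ≫ L.map (OA.word (toWord f)) ≫ _
      rw [Ainit_map_pathLR]
      simp only [eqToHom_refl]
      exact ((Category.id_comp _).trans (Category.comp_id _)).symm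
    · -- right ⟶ left
      exact (path_rl_false f).elim
    · -- right ⟶ right
      rw [path_rr_nil f]
      show (Ainit L).map (𝟙 (IA.r A)) = _ ≫ L.map (𝟙 (OA.r A)) ≫ _
      simp only [CategoryTheory.Functor.map_id, eqToHom_refl]
      exact ((Category.id_comp _).trans (Category.comp_id _)).symm

end Aux2


section Aux3

variable {A : Type} {C : Type u} [Category.{v} C]
variable [HasColimitsOfShape (Discrete (List A)) C] (L : OA A ⥤ C)

/-- Components of the canonical morphism out of `Ainit L`. -/
noncomputable def canonApp (M : IA A ⥤ C) (hM : Accepts M L) :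
    ∀ X : IA A, (Ainit L).obj X ⟶ M.obj X
  | WObj.left => eqToHom (Functor.congr_obj hM (OA.l A)).symm
  | WObj.center => Sigma.desc (fun u : List A =>
      eqToHom (Functor.congr_obj hM (OA.l A)).symm ≫ M.map (IA.tri A ≫ pathCC u))
  | WObj.right => eqToHom (Functor.congr_obj hM (OA.r A)).symm

theorem M_map_pathLR (M : IA A ⥤ C) (hM : Accepts M L) (u : List A) :
    M.map (pathLR u) = eqToHom (Functor.congr_obj hM (OA.l A)) ≫ L.map (OA.word u) ≫
      eqToHom (Functor.congr_obj hM (OA.r A)).symm :=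
  Functor.congr_hom hM (OA.word u)

theorem canon_nat_edge (M : IA A ⥤ C) (hM : Accepts M L) :
    ∀ {X Y : WObj A} (e : WEdge X Y),
      (Ainit L).map (Quiver.Hom.toPath e) ≫ canonApp L M hM Y =
        canonApp L M hM X ≫ M.map (Quiver.Hom.toPath e) := by
  intro X Y e
  cases e with
  | tri =>
      erw [Ainit_map_tri]
      show Sigma.ι (fun _ : List A => L.obj (OA.l A)) ([] : List A) ≫
        Sigma.desc (fun u : List A =>
          eqToHom (Functor.congr_obj hM (OA.l A)).symm ≫ M.map (IA.tri A ≫ pathCC u)) = _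
      rw [colimit.ι_desc]
      show eqToHom _ ≫ M.map (IA.tri A ≫ 𝟙 (IA.c A)) = _
      rw [Category.comp_id]
      rfl
  | letter a =>
      erw [Ainit_map_letter]
      apply Sigma.hom_ext
      intro u
      erw [← Category.assoc, Sigma.ι_desc, Sigma.ι_desc, ← Category.assoc, Sigma.ι_desc]
      erw [pathCC_comp, pathCC_single,
        show IA.tri A ≫ Quiver.Path.comp (pathCC u) (Quiver.Hom.toPath (WEdge.letter a)) =
          (IA.tri A ≫ pathCC u) ≫ IA.letter a from rfl, Functor.map_comp, ← Category.assoc]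
      with_unfolding_all rfl
  | tril =>
      erw [Ainit_map_tril]
      apply Sigma.hom_ext
      intro u
      erw [← Category.assoc, Sigma.ι_desc, ← Category.assoc, Sigma.ι_desc]
      erw [Category.assoc, ← Functor.map_comp]
      erw [show (IA.tri A ≫ pathCC u) ≫ IA.tril A = pathLR u from
        (Category.assoc _ _ _).trans rfl]
      erw [M_map_pathLR L M hM u]
      erw [eqToHom_trans_assoc, eqToHom_refl, Category.id_comp]
      rfl

theorem canon_natural (M : IA A ⥤ C) (hM : Accepts M L) :
    ∀ {X Y : IA A} (f : X ⟶ Y),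
      (Ainit L).map f ≫ canonApp L M hM Y = canonApp L M hM X ≫ M.map f := by
  intro (X : WObj A) (Y : WObj A) f
  change Quiver.Path X Y at f
  induction f with
  | nil =>
      erw [CategoryTheory.Functor.map_id,
        CategoryTheory.Functor.map_id, Category.id_comp, Category.comp_id]
  | cons p e ih =>
      erw [show (Ainit L).map (@Quiver.Path.cons (WObj A) (instQuiverWObj A) _ _ _ p e) =
            (Ainit L).map p ≫
            (Ainit L).map (@Quiver.Hom.toPath (WObj A) (instQuiverWObj A) _ _ e) from by
          with_unfolding_all exact ((Ainit L).map_comp p e.toPath),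
        show M.map (@Quiver.Path.cons (WObj A) (instQuiverWObj A) _ _ _ p e) = M.map p ≫
            M.map (@Quiver.Hom.toPath (WObj A) (instQuiverWObj A) _ _ e) from by
          with_unfolding_all exact (M.map_comp p e.toPath),
        Category.assoc, canon_nat_edge L M hM e, ← Category.assoc, ih, Category.assoc]

/-- The canonical natural transformation. -/
noncomputable def canonNat (M : IA A ⥤ C) (hM : Accepts M L) : Ainit L ⟶ M where
  app := canonApp L M hM
  naturality _ _ f := canon_natural L M hM f

theorem canon_whisker (M : IA A ⥤ C) (hM : Accepts M L) (h0 : Accepts (Ainit L) L) :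
    CategoryTheory.Functor.whiskerLeft (OA.inc A) (canonNat L M hM) = eqToHom (h0.trans hM.symm) := by
  apply NatTrans.ext
  funext X
  rcases X with ⟨(_|_|_), h⟩
  · show canonApp L M hM WObj.left = _
    erw [eqToHom_app]
    rfl
  · exact absurd rfl h
  · show canonApp L M hM WObj.right = _
    erw [eqToHom_app]
    rfl

theorem auto_hom_prop {L : OA A ⥤ C} {M N : Auto A L} (α : M ⟶ N) :
    CategoryTheory.Functor.whiskerLeft (OA.inc A) (Auto.nat α) = eqToHom (M.2.trans N.2.symm) :=
  (show { β : M.1 ⟶ N.1 //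
      CategoryTheory.Functor.whiskerLeft (OA.inc A) β = eqToHom (M.2.trans N.2.symm) } from α).2

end Aux3

/-- `𝒜_init` accepts `L` and is an initial object of `Auto(L)`. -/
theorem Ainit_accepts_and_initial [HasColimitsOfShape (Discrete (List A)) C]
    (L : OA A ⥤ C) :
    ∃ h : Accepts (Ainit L) L, Nonempty (IsInitial (Auto.mk (Ainit L) h)) := by
  have h0 := ainit_accepts L
  refine ⟨h0, ⟨IsInitial.ofUniqueHom
    (fun N => ⟨canonNat L N.1 N.2, canon_whisker L N.1 N.2 h0⟩) ?_⟩⟩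
  intro N m
  have hq : Auto.nat m = canonNat L N.1 N.2 := by
    apply NatTrans.ext
    funext X
    have hl : (Auto.nat m).app (IA.l A) = eqToHom (Functor.congr_obj N.2 (OA.l A)).symm := by
      have h1 := congrArg (fun (t : OA.inc A ⋙ Ainit L ⟶ OA.inc A ⋙ N.1) => t.app (OA.l A))
        (auto_hom_prop m)
      simp only [eqToHom_app] at h1
      exact h1.trans rfl
    rcases X with _|_|_
    · exact hl
    · -- center
      apply Sigma.hom_ext
      intro u
      have hι : (Ainit L).map (IA.tri A ≫ pathCC u) =
          Sigma.ι (fun _ : List A => L.obj (OA.l A)) u := by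
        rw [Functor.map_comp, Ainit_map_tri]
        erw [iota_pathCC]
        rfl
      rw [← hι]
      have hnat : (Ainit L).map (IA.tri A ≫ pathCC u) ≫
            (Auto.nat m).app (WObj.center : IA A) =
          (Auto.nat m).app (IA.l A) ≫ N.1.map (IA.tri A ≫ pathCC u) :=
        (Auto.nat m).naturality (IA.tri A ≫ pathCC u)
      erw [hnat, hl]
      show _ = (Ainit L).map (IA.tri A ≫ pathCC u) ≫ canonApp L N.1 N.2 WObj.center
      erw [hι]
      show _ = Sigma.ι (fun _ : List A => L.obj (OA.l A)) u ≫ Sigma.desc _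
      erw [colimit.ι_desc]
      rfl
    · -- right
      have h1 := congrArg (fun (t : OA.inc A ⋙ Ainit L ⟶ OA.inc A ⋙ N.1) => t.app (OA.r A))
        (auto_hom_prop m)
      simp only [eqToHom_app] at h1
      exact h1.trans rfl
  exact Subtype.ext hq
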